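/- Under uniform price λ̄ = OPT/(2·Γ̄), if an equilibrium state has every buyer i ∈ B = {i : v_i ≥ λ̄} exhausting their budget (x_i = B_i/λ̄), then MLW(x) ≥ Σ_{i∈B}(v_i·Γ_i + B_i) ≥ OPT − Γ̄·λ̄ = OPT/2, using the upper bound OPT ≤ Σ_{i∈B}(v_i·Γ_i + B_i) + Γ̄·λ̄. -/

import Mathlib

open Finset

/-- Market Approximate Price, second case: with uniform price `λ̄ = OPT/(2Γ̄)`,
if every buyer exhausts the budget (`x_i = B_i/λ̄`), then
`MLW(x) ≥ ∑_{i∈B}(v_iΓ_i + B_i) ≥ OPT − Γ̄λ̄ = OPT/2`. -/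
theorem stmt_3 (n : ℕ) (v B Γ : ℕ → ℝ)
    (hv : ∀ i ∈ Icc 1 n, 0 < v i)
    (hB : ∀ i ∈ Icc 1 n, 0 ≤ B i) (hΓ : ∀ i ∈ Icc 1 n, 0 ≤ Γ i)
    (Γbar OPT : ℝ) (hΓbar : Γbar = ∑ i ∈ Icc 1 n, Γ i) (hΓpos : 0 < Γbar)
    (hOPTpos : 0 < OPT)
    (hOPT : IsGreatest {w : ℝ | ∃ y : ℕ → ℝ,
      (∑ i ∈ Icc 1 n, y i = 0) ∧ (∀ i ∈ Icc 1 n, -Γ i ≤ y i) ∧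
      w = ∑ i ∈ Icc 1 n, (v i * Γ i + min (v i * y i) (B i))} OPT)
    (lam : ℝ) (hlam : lam = OPT / (2 * Γbar))
    (x : ℕ → ℝ)
    (hsum : ∑ i ∈ Icc 1 n, x i = 0)
    (hfeas : ∀ i ∈ Icc 1 n, -Γ i ≤ x i)
    (hbuy : ∀ i ∈ Icc 1 n, lam ≤ v i → x i = B i / lam) :
    (∑ i ∈ (Icc 1 n).filter (fun i => lam ≤ v i), (v i * Γ i + B i) ≤
      ∑ i ∈ Icc 1 n, (v i * Γ i + min (v i * x i) (B i))) ∧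
    (OPT - Γbar * lam ≤
      ∑ i ∈ (Icc 1 n).filter (fun i => lam ≤ v i), (v i * Γ i + B i)) ∧
    OPT - Γbar * lam = OPT / 2 := by
  have hlampos : 0 < lam := by
    rw [hlam]
    positivity
  refine ⟨?_, ?_, ?_⟩
  · -- part 1
    rw [← Finset.sum_filter_add_sum_filter_not (Icc 1 n) (fun i => lam ≤ v i)]
    have h1 : ∑ i ∈ (Icc 1 n).filter (fun i => lam ≤ v i), (v i * Γ i + B i)
        = ∑ i ∈ (Icc 1 n).filter (fun i => lam ≤ v i),
            (v i * Γ i + min (v i * x i) (B i)) := by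
      apply Finset.sum_congr rfl
      intro i hi
      rw [Finset.mem_filter] at hi
      obtain ⟨hi, hvi⟩ := hi
      have hx := hbuy i hi hvi
      have hBi := hB i hi
      have : B i ≤ v i * x i := by
        rw [hx]
        calc B i = lam * (B i / lam) := by field_simp
        _ ≤ v i * (B i / lam) := by
            apply mul_le_mul_of_nonneg_right hvi
            positivity
      rw [min_eq_right this]
    rw [h1]
    have h2 : 0 ≤ ∑ i ∈ (Icc 1 n).filter (fun i => ¬ lam ≤ v i),
        (v i * Γ i + min (v i * x i) (B i)) := by
      apply Finset.sum_nonneg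
      intro i hi
      rw [Finset.mem_filter] at hi
      obtain ⟨hi, _⟩ := hi
      have h3 : -(v i * Γ i) ≤ min (v i * x i) (B i) := by
        apply le_min
        · have := hfeas i hi
          nlinarith [(hv i hi)]
        · have := hB i hi
          nlinarith [hv i hi, hΓ i hi]
      linarith
    linarith
  · -- part 2
    obtain ⟨y, hy0, hyfeas, hyval⟩ := hOPT.1
    have key : OPT ≤ ∑ i ∈ (Icc 1 n).filter (fun i => lam ≤ v i), (v i * Γ i + B i)
        + ∑ i ∈ Icc 1 n, lam * (Γ i + y i) := by
      rw [hyval, ← Finset.sum_filter_add_sum_filter_not (Icc 1 n) (fun i => lam ≤ v i)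
        (fun i => v i * Γ i + min (v i * y i) (B i))]
      have hb : ∑ i ∈ (Icc 1 n).filter (fun i => lam ≤ v i),
          (v i * Γ i + min (v i * y i) (B i))
          ≤ ∑ i ∈ (Icc 1 n).filter (fun i => lam ≤ v i), (v i * Γ i + B i) := by
        apply Finset.sum_le_sum
        intro i hi
        have := min_le_right (v i * y i) (B i)
        linarith
      have hs : ∑ i ∈ (Icc 1 n).filter (fun i => ¬ lam ≤ v i),
          (v i * Γ i + min (v i * y i) (B i))
          ≤ ∑ i ∈ Icc 1 n, lam * (Γ i + y i) := by
        calc ∑ i ∈ (Icc 1 n).filter (fun i => ¬ lam ≤ v i),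
              (v i * Γ i + min (v i * y i) (B i))
            ≤ ∑ i ∈ (Icc 1 n).filter (fun i => ¬ lam ≤ v i), lam * (Γ i + y i) := by
              apply Finset.sum_le_sum
              intro i hi
              rw [Finset.mem_filter] at hi
              obtain ⟨hi, hvi⟩ := hi
              push_neg at hvi
              have h1 : min (v i * y i) (B i) ≤ v i * y i := min_le_left _ _
              have h2 : v i * Γ i + v i * y i ≤ lam * (Γ i + y i) := by
                have hfe := hyfeas i hi
                nlinarith [hv i hi]
              linarith
          _ ≤ ∑ i ∈ Icc 1 n, lam * (Γ i + y i) := by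
              apply Finset.sum_le_sum_of_subset_of_nonneg (Finset.filter_subset _ _)
              intro i hi _
              have := hyfeas i hi
              nlinarith
      linarith
    have hsum2 : ∑ i ∈ Icc 1 n, lam * (Γ i + y i) = Γbar * lam := by
      rw [← Finset.mul_sum, Finset.sum_add_distrib, hy0, ← hΓbar]
      ring
    rw [hsum2] at key
    linarith
  · rw [hlam]
    field_simp
    ring
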